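/- Let P(x) = ∏_{i=1}^n (x − a_i) be a monic polynomial of degree n ≥ 2 with a_1, …, a_n positive real numbers, let a_j = min{a_1, …, a_n}, and let s_1, …, s_n be the indices of the local expansion P(x) = Σ_{k=1}^n s_k (x − a_j)^k. Then for every k with 1 ≤ k ≤ n−1, |s_k| ≤ e_{n−k}((a_i)_{i≠j}), the (n−k)-th elementary symmetric polynomial of the n−1 zeros a_i with i ≠ j. -/

import Mathlib

open Polynomial

/-- If `P(x) = ∏ (x - aᵢ)` with all `aᵢ > 0`, `a_j` the minimum, and
`P(x) = Σ_{k=1}^n s_k (x - a_j)^k` is the local expansion at `a_j`, then for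
`1 ≤ k ≤ n-1` we have `|s_k| ≤ e_{n-k}((aᵢ)_{i≠j})`, the `(n-k)`-th elementary
symmetric polynomial of the remaining zeros. -/
theorem stmt_7 (n : ℕ) (hn : 2 ≤ n) (a : Fin n → ℝ) (hpos : ∀ i, 0 < a i)
    (j : Fin n) (hj : ∀ i, a j ≤ a i) (s : ℕ → ℝ)
    (hs : ∀ x : ℝ, ∏ i, (x - a i) = ∑ k ∈ Finset.Icc 1 n, s k * (x - a j) ^ k) :
    ∀ k, 1 ≤ k → k ≤ n - 1 →
      |s k| ≤ ∑ t ∈ (Finset.univ.erase j).powersetCard (n - k), ∏ i ∈ t, a i := by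
  intro k hk1 hk2
  set r : Fin n → ℝ := fun i => a j - a i with hr
  set p : Polynomial ℝ := ∏ i, (X + C (r i)) with hp
  set q : Polynomial ℝ := ∑ m ∈ Finset.Icc 1 n, C (s m) * X ^ m with hq
  have hpq : p = q := by
    apply Polynomial.funext
    intro y
    have := hs (y + a j)
    simp only [hp, hq, eval_prod, eval_finset_sum, eval_add, eval_X, eval_C, eval_mul,
      eval_pow, hr]
    convert this using 2 with i
    · ring
    · ring_nf
  have hcard : (Finset.univ.erase j).card = n - 1 := by
    rw [Finset.card_erase_of_mem (Finset.mem_univ j)]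
    simp
  have hcq : q.coeff k = s k := by
    rw [hq, Polynomial.finset_sum_coeff]
    rw [Finset.sum_eq_single k]
    · simp
    · intro m hm hmk
      rw [coeff_C_mul, coeff_X_pow, if_neg (Ne.symm hmk), mul_zero]
    · intro h
      exact absurd (Finset.mem_Icc.mpr ⟨hk1, by omega⟩) h
  have hsplit : p = X * ∏ i ∈ Finset.univ.erase j, (X + C (r i)) := by
    rw [hp, ← Finset.mul_prod_erase Finset.univ _ (Finset.mem_univ j)]
    simp [hr]
  have hk' : k - 1 ≤ (Finset.univ.erase j).card := by omega
  have hcp : p.coeff k = ∑ t ∈ (Finset.univ.erase j).powersetCard (n - k),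
      ∏ i ∈ t, r i := by
    have hk'' : k = (k - 1) + 1 := by omega
    rw [hsplit, hk'', Polynomial.coeff_X_mul,
      Finset.prod_X_add_C_coeff _ _ hk', hcard]
    congr 2
    omega
  have hsk : s k = ∑ t ∈ (Finset.univ.erase j).powersetCard (n - k), ∏ i ∈ t, r i := by
    rw [← hcq, ← hpq, hcp]
  rw [hsk]
  calc |∑ t ∈ (Finset.univ.erase j).powersetCard (n - k), ∏ i ∈ t, r i|
      ≤ ∑ t ∈ (Finset.univ.erase j).powersetCard (n - k), |∏ i ∈ t, r i| :=
        Finset.abs_sum_le_sum_abs _ _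
    _ ≤ ∑ t ∈ (Finset.univ.erase j).powersetCard (n - k), ∏ i ∈ t, a i := by
        apply Finset.sum_le_sum
        intro t _
        rw [Finset.abs_prod]
        apply Finset.prod_le_prod (fun i _ => abs_nonneg _)
        intro i _
        rw [hr, abs_sub_comm, abs_of_nonneg (by linarith [hj i])]
        linarith [hpos j]
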